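/- arXiv:2305.17725 — 3 statements merged into one kernel-verified Lean document; each statement's English description precedes it below -/
import Mathlib

section
/- The set-valued map x ↦ F[f](x) given by the Filippov convexification of a locally bounded f: ℝⁿ → ℝⁿ is upper semicontinuous: for every x and every open set U containing F[f](x), there exists ε > 0 such that F[f](y) ⊆ U for all y with ‖y − x‖ < ε. -/
/-- The Filippov convexification of a locally bounded `f : ℝⁿ → ℝⁿ` is upper semicontinuous
as a set-valued map. -/
theorem filippov_upper_semicontinuous (n : ℕ)
    (f : EuclideanSpace ℝ (Fin n) → EuclideanSpace ℝ (Fin n))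
    (hloc : ∀ x : EuclideanSpace ℝ (Fin n), ∃ ε > (0 : ℝ), ∃ C : ℝ,
      ∀ y ∈ Metric.ball x ε, ‖f y‖ ≤ C)
    (F : EuclideanSpace ℝ (Fin n) → Set (EuclideanSpace ℝ (Fin n)))
    (hF : ∀ x, F x = ⋂ ε > (0 : ℝ), closure (convexHull ℝ (f '' Metric.ball x ε))) :
    ∀ (x : EuclideanSpace ℝ (Fin n)) (U : Set (EuclideanSpace ℝ (Fin n))),
      IsOpen U → F x ⊆ U →
        ∃ ε > (0 : ℝ), ∀ y : EuclideanSpace ℝ (Fin n), ‖y - x‖ < ε → F y ⊆ U := by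
  intro x U hU hFU
  obtain ⟨δ, hδ, C, hC⟩ := hloc x
  -- K ε = closure (convexHull (f '' ball x ε))
  set K : ℝ → Set (EuclideanSpace ℝ (Fin n)) :=
    fun ε => closure (convexHull ℝ (f '' Metric.ball x ε)) with hK
  have Kmono : ∀ {a b : ℝ}, a ≤ b → K a ⊆ K b := by
    intro a b hab
    exact closure_mono (convexHull_mono (Set.image_mono (Metric.ball_subset_ball hab)))
  -- K δ is contained in a compact ball
  have hsub : K δ ⊆ Metric.closedBall (0 : EuclideanSpace ℝ (Fin n)) C := by
    apply closure_minimal _ Metric.isClosed_closedBall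
    apply convexHull_min _ (convex_closedBall _ _)
    rintro _ ⟨y, hy, rfl⟩
    simpa [mem_closedBall_zero_iff] using hC y hy
  have hKcompact : IsCompact (K δ) :=
    (isCompact_closedBall _ _).of_isClosed_subset isClosed_closure hsub
  -- the countable family
  have hδk : ∀ k : ℕ, (0 : ℝ) < δ / (k + 1) := fun k =>
    div_pos hδ (by positivity)
  have hδk' : ∀ k : ℕ, δ / (k + 1) ≤ δ := fun k => by
    rw [div_le_iff₀ (by positivity)]
    nlinarith [Nat.cast_nonneg (α := ℝ) k]
  -- intersection of K (δ/(k+1)) over k lies in F x, hence in U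
  have hinter : K δ ∩ ⋂ k : ℕ, (K (δ / (k + 1)) ∩ Uᶜ) = ∅ := by
    rw [Set.eq_empty_iff_forall_notMem]
    rintro z ⟨hz1, hz2⟩
    simp only [Set.mem_iInter, Set.mem_inter_iff] at hz2
    have hzU : z ∈ U := by
      apply hFU
      rw [hF]
      simp only [Set.mem_iInter]
      intro ε hε
      obtain ⟨k, hk⟩ := exists_nat_gt (δ / ε)
      have hk' : δ / (k + 1) ≤ ε := by
        rw [div_le_iff₀ (by positivity)]
        rw [div_lt_iff₀ hε] at hk
        nlinarith [Nat.cast_nonneg (α := ℝ) k]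
      exact Kmono hk' (hz2 k).1
    exact (hz2 0).2 hzU
  obtain ⟨t, ht⟩ := hKcompact.elim_finite_subfamily_closed
    (fun k : ℕ => K (δ / (k + 1)) ∩ Uᶜ)
    (fun k => IsClosed.inter isClosed_closure (hU.isClosed_compl)) hinter
  -- take N = max of t
  set N : ℕ := t.sup id with hN
  set ε₀ : ℝ := δ / (N + 1) with hε₀
  have hε₀pos : 0 < ε₀ := hδk N
  have hKU : K ε₀ ⊆ U := by
    intro z hz
    by_contra hzU
    have : z ∈ K δ ∩ ⋂ k ∈ t, (K (δ / (k + 1)) ∩ Uᶜ) := by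
      refine ⟨Kmono (hδk' N) hz, ?_⟩
      simp only [Set.mem_iInter, Set.mem_inter_iff]
      intro k hk
      have hkN : (k : ℝ) + 1 ≤ (N : ℝ) + 1 := by
        exact_mod_cast Nat.succ_le_succ (Finset.le_sup (f := id) hk)
      have : ε₀ ≤ δ / (k + 1) := by
        apply div_le_div_of_nonneg_left hδ.le (by positivity) hkN
      exact ⟨Kmono this hz, hzU⟩
    rw [ht] at this
    exact this
  refine ⟨ε₀ / 2, by positivity, fun y hy => ?_⟩
  have hball : Metric.ball y (ε₀ / 2) ⊆ Metric.ball x ε₀ := by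
    intro z hz
    rw [Metric.mem_ball] at hz ⊢
    have hxy : dist y x < ε₀ / 2 := by
      rwa [dist_eq_norm]
    calc dist z x ≤ dist z y + dist y x := dist_triangle _ _ _
      _ < ε₀ / 2 + ε₀ / 2 := add_lt_add hz hxy
      _ = ε₀ := by ring
  intro z hz
  apply hKU
  rw [hF] at hz
  have := Set.mem_iInter.1 hz (ε₀ / 2)
  have hz' := Set.mem_iInter.1 this (by positivity)
  exact closure_mono (convexHull_mono (Set.image_mono hball)) hz'
end

section
/- An iterated function system on a complete metric space given by finitely many maps F_m with constant probabilities p_m > 0 summing to 1 and satisfying the average contraction condition Σ_m p_m · Lip(F_m) < 1 (each F_m Lipschitz) admits a unique fixed point of the induced map on probability measures with finite first moment equipped with the Wasserstein-1 distance; that is, the dual transfer operator μ ↦ Σ_m p_m · (F_m)_* μ is a contraction on the Wasserstein-1 space and hence has a unique invariant probability measure. -/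
open MeasureTheory ENNReal

/-- The Wasserstein-1 (Kantorovich) distance, defined via couplings. -/
noncomputable def W1 {X : Type*} [MeasurableSpace X] [MetricSpace X]
    (μ ν : Measure X) : ℝ≥0∞ :=
  ⨅ (γ : Measure (X × X)) (_ : γ.map Prod.fst = μ ∧ γ.map Prod.snd = ν),
    ∫⁻ p : X × X, edist p.1 p.2 ∂γ

/-- A measure has a finite first moment. -/
def HasFiniteFirstMoment {X : Type*} [MeasurableSpace X] [MetricSpace X]
    (μ : Measure X) : Prop :=
  ∃ x₀ : X, ∫⁻ x, edist x x₀ ∂μ ≠ ⊤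

open Filter Set

namespace IFSaux

lemma tsub_aux {A B C : ℝ≥0∞} (h : B ≤ A + C) : 1 - A ≤ (1 - B) + C := by
  rw [tsub_le_iff_right]
  calc (1:ℝ≥0∞) ≤ (1 - B) + B := le_tsub_add
  _ ≤ (1 - B) + (A + C) := by gcongr
  _ = 1 - B + C + A := by ring

variable {X : Type*} [MeasurableSpace X] [MetricSpace X] [OpensMeasurableSpace X]

lemma moment_all (μ : Measure X) [IsFiniteMeasure μ] {x₀ : X}
    (h : ∫⁻ x, edist x x₀ ∂μ ≠ ⊤) (x₁ : X) : ∫⁻ x, edist x x₁ ∂μ ≠ ⊤ := by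
  have hb : ∫⁻ x, edist x x₁ ∂μ ≤ ∫⁻ x, (edist x x₀ + edist x₀ x₁) ∂μ :=
    lintegral_mono fun x => edist_triangle _ _ _
  rw [lintegral_add_right _ measurable_const, lintegral_const] at hb
  exact ne_top_of_le_ne_top (ENNReal.add_ne_top.mpr ⟨h, ENNReal.mul_ne_top (edist_ne_top _ _) (measure_ne_top μ _)⟩) hb

lemma W1_le_coupling {μ ν : Measure X} (γ : Measure (X × X))
    (h1 : γ.map Prod.fst = μ) (h2 : γ.map Prod.snd = ν) :
    W1 μ ν ≤ ∫⁻ p : X × X, edist p.1 p.2 ∂γ :=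
  iInf₂_le γ ⟨h1, h2⟩

lemma lintegral_fst {γ : Measure (X × X)} {μ : Measure X} (h1 : γ.map Prod.fst = μ)
    {f : X → ℝ≥0∞} (hf : Measurable f) : ∫⁻ q : X × X, f q.1 ∂γ = ∫⁻ x, f x ∂μ := by
  rw [← h1, lintegral_map hf measurable_fst]

lemma lintegral_snd {γ : Measure (X × X)} {ν : Measure X} (h2 : γ.map Prod.snd = ν)
    {f : X → ℝ≥0∞} (hf : Measurable f) : ∫⁻ q : X × X, f q.2 ∂γ = ∫⁻ x, f x ∂ν := by
  rw [← h2, lintegral_map hf measurable_snd]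

lemma W1_lt_top {μ ν : Measure X} [IsProbabilityMeasure μ] [IsProbabilityMeasure ν]
    (hμ : HasFiniteFirstMoment μ) (hν : HasFiniteFirstMoment ν) : W1 μ ν < ⊤ := by
  obtain ⟨x₀, hμ0⟩ := hμ
  obtain ⟨x₁, hν1⟩ := hν
  have hν0 : ∫⁻ x, edist x₀ x ∂ν ≠ ⊤ := by
    simpa only [edist_comm] using moment_all ν hν1 x₀
  have h1 : (μ.prod ν).map Prod.fst = μ := by
    rw [Measure.map_fst_prod]; simp
  have h2 : (μ.prod ν).map Prod.snd = ν := by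
    rw [Measure.map_snd_prod]; simp
  refine lt_of_le_of_lt (W1_le_coupling (μ.prod ν) h1 h2) ?_
  have hb : ∫⁻ q : X × X, edist q.1 q.2 ∂(μ.prod ν)
      ≤ ∫⁻ q : X × X, (edist q.1 x₀ + edist x₀ q.2) ∂(μ.prod ν) :=
    lintegral_mono fun q => edist_triangle _ _ _
  have m1 : Measurable fun x : X => edist x x₀ := (continuous_id.edist continuous_const).measurable
  have m2 : Measurable fun x : X => edist x₀ x := (continuous_const.edist continuous_id).measurable
  have m1' : Measurable fun q : X × X => edist q.1 x₀ := m1.comp measurable_fst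
  rw [lintegral_add_left m1'] at hb
  rw [lintegral_fst h1 m1, lintegral_snd h2 m2] at hb
  exact lt_of_le_of_lt hb (by
    exact ENNReal.add_lt_top.mpr ⟨hμ0.lt_top, hν0.lt_top⟩)

end IFSaux

section contraction

variable {X : Type*} [MeasurableSpace X] [MetricSpace X] [BorelSpace X]
  [SecondCountableTopology X] {M : Type*} [Fintype M]

lemma sum_smul_map_apply (p : M → ℝ≥0∞) (F : M → X → X) (hF : ∀ m, Measurable (F m))
    (μ : Measure X) {s : Set X} (hs : MeasurableSet s) :
    (∑ m, p m • Measure.map (F m) μ) s = ∑ m, p m * μ (F m ⁻¹' s) := by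
  rw [Measure.finset_sum_apply]
  exact Finset.sum_congr rfl fun m _ => by
    rw [Measure.smul_apply, Measure.map_apply (hF m) hs, smul_eq_mul]

lemma contraction_coupling (F : M → X → X) (L : M → NNReal)
    (hLip : ∀ m, LipschitzWith (L m) (F m)) (p : M → ℝ≥0∞)
    {μ ν : Measure X} (γ : Measure (X × X))
    (h1 : γ.map Prod.fst = μ) (h2 : γ.map Prod.snd = ν) :
    W1 (∑ m, p m • Measure.map (F m) μ) (∑ m, p m • Measure.map (F m) ν)
      ≤ ∑ m, p m * ((L m : ℝ≥0∞) * ∫⁻ q : X × X, edist q.1 q.2 ∂γ) := by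
  have hF : ∀ m, Measurable (F m) := fun m => (hLip m).continuous.measurable
  have hFF : ∀ m, Measurable fun q : X × X => (F m q.1, F m q.2) :=
    fun m => ((hF m).comp measurable_fst).prodMk ((hF m).comp measurable_snd)
  set γ' : Measure (X × X) := ∑ m, p m • γ.map (fun q : X × X => (F m q.1, F m q.2)) with hγ'
  have hmarg1 : γ'.map Prod.fst = ∑ m, p m • Measure.map (F m) μ := by
    refine Measure.ext fun s hs => ?_
    rw [Measure.map_apply measurable_fst hs, hγ', Measure.finset_sum_apply,
      sum_smul_map_apply p F hF μ hs]
    refine Finset.sum_congr rfl fun m _ => ?_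
    rw [Measure.smul_apply, Measure.map_apply (hFF m) (measurable_fst hs), smul_eq_mul,
      ← h1, Measure.map_apply measurable_fst ((hF m) hs)]
    rfl
  have hmarg2 : γ'.map Prod.snd = ∑ m, p m • Measure.map (F m) ν := by
    refine Measure.ext fun s hs => ?_
    rw [Measure.map_apply measurable_snd hs, hγ', Measure.finset_sum_apply,
      sum_smul_map_apply p F hF ν hs]
    refine Finset.sum_congr rfl fun m _ => ?_
    rw [Measure.smul_apply, Measure.map_apply (hFF m) (measurable_snd hs), smul_eq_mul,
      ← h2, Measure.map_apply measurable_snd ((hF m) hs)]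
    rfl
  refine le_trans (IFSaux.W1_le_coupling γ' hmarg1 hmarg2) ?_
  have hed : Measurable fun q : X × X => edist q.1 q.2 :=
    continuous_edist.measurable
  rw [hγ', lintegral_finset_sum_measure]
  refine Finset.sum_le_sum fun m _ => ?_
  rw [lintegral_smul_measure, lintegral_map hed (hFF m)]
  refine mul_le_mul_right ?_ (p m)
  calc ∫⁻ q : X × X, edist (F m q.1) (F m q.2) ∂γ
      ≤ ∫⁻ q : X × X, (L m : ℝ≥0∞) * edist q.1 q.2 ∂γ :=
        lintegral_mono fun q => (hLip m) q.1 q.2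
    _ = (L m : ℝ≥0∞) * ∫⁻ q : X × X, edist q.1 q.2 ∂γ := lintegral_const_mul' _ _ coe_ne_top

lemma contraction (F : M → X → X) (L : M → NNReal)
    (hLip : ∀ m, LipschitzWith (L m) (F m)) (p : M → ℝ≥0∞)
    (hcontr : ∑ m, p m * (L m : ℝ≥0∞) < 1)
    {μ ν : Measure X} [IsProbabilityMeasure μ] [IsProbabilityMeasure ν]
    (hμ : HasFiniteFirstMoment μ) (hν : HasFiniteFirstMoment ν) :
    W1 (∑ m, p m • Measure.map (F m) μ) (∑ m, p m • Measure.map (F m) ν)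
      ≤ (∑ m, p m * (L m : ℝ≥0∞)) * W1 μ ν := by
  set c := ∑ m, p m * (L m : ℝ≥0∞) with hc
  have hW : W1 μ ν < ⊤ := IFSaux.W1_lt_top hμ hν
  refine ENNReal.le_of_forall_pos_le_add fun ε hε _ => ?_
  have hlt : W1 μ ν < W1 μ ν + ε := ENNReal.lt_add_right hW.ne (by exact_mod_cast hε.ne')
  rw [W1] at hlt
  obtain ⟨γ, hγlt⟩ := iInf_lt_iff.mp hlt
  obtain ⟨⟨h1, h2⟩, hIlt⟩ := iInf_lt_iff.mp hγlt
  calc W1 (∑ m, p m • Measure.map (F m) μ) (∑ m, p m • Measure.map (F m) ν)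
      ≤ ∑ m, p m * ((L m : ℝ≥0∞) * ∫⁻ q : X × X, edist q.1 q.2 ∂γ) :=
        contraction_coupling F L hLip p γ h1 h2
    _ = c * ∫⁻ q : X × X, edist q.1 q.2 ∂γ := by
        rw [hc, Finset.sum_mul]
        exact Finset.sum_congr rfl fun m _ => by ring
    _ ≤ c * (W1 μ ν + ε) := by gcongr; exact hIlt.le
    _ = c * W1 μ ν + c * ε := by ring
    _ ≤ c * W1 μ ν + ε := add_le_add_right
        (by simpa using mul_le_mul_left hcontr.le (ε : ℝ≥0∞)) _

end contraction

section zero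

variable {X : Type*} [MeasurableSpace X] [MetricSpace X] [BorelSpace X]
  [SecondCountableTopology X]

lemma lintegral_eq_of_W1_zero {μ ν : Measure X} [IsProbabilityMeasure μ] [IsProbabilityMeasure ν]
    (h : W1 μ ν = 0) {f : X → ℝ≥0∞} (hf : Measurable f) (hb : ∀ x, f x ≤ 1)
    {K : ℝ≥0∞} (hK0 : K ≠ 0) (hKt : K ≠ ⊤) (hLipf : ∀ x y, f x ≤ f y + K * edist x y) :
    ∫⁻ x, f x ∂μ = ∫⁻ x, f x ∂ν := by
  have hfin : ∀ ρ : Measure X, IsProbabilityMeasure ρ → ∫⁻ x, f x ∂ρ < ⊤ := fun ρ hρ =>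
    lt_of_le_of_lt (le_trans (lintegral_mono hb) (by simp)) one_lt_top
  have main : ∀ ε : NNReal, 0 < ε →
      ∫⁻ x, f x ∂μ ≤ ∫⁻ x, f x ∂ν + ε ∧ ∫⁻ x, f x ∂ν ≤ ∫⁻ x, f x ∂μ + ε := by
    intro ε hε
    have hlt : W1 μ ν < ε / K := by
      rw [h]; exact ENNReal.div_pos (by exact_mod_cast hε.ne') hKt
    rw [W1] at hlt
    obtain ⟨γ, hγlt⟩ := iInf_lt_iff.mp hlt
    obtain ⟨⟨h1, h2⟩, hIlt⟩ := iInf_lt_iff.mp hγlt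
    have hm2 : Measurable fun q : X × X => f q.2 := hf.comp measurable_snd
    have hm1 : Measurable fun q : X × X => f q.1 := hf.comp measurable_fst
    have hKe : K * ∫⁻ q : X × X, edist q.1 q.2 ∂γ ≤ ε := by
      calc K * ∫⁻ q : X × X, edist q.1 q.2 ∂γ ≤ K * (ε / K) := mul_le_mul_right hIlt.le K
        _ = ε := ENNReal.mul_div_cancel hK0 hKt
    constructor
    · calc ∫⁻ x, f x ∂μ = ∫⁻ q : X × X, f q.1 ∂γ := (IFSaux.lintegral_fst h1 hf).symm
        _ ≤ ∫⁻ q : X × X, (f q.2 + K * edist q.1 q.2) ∂γ :=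
            lintegral_mono fun q => hLipf q.1 q.2
        _ = ∫⁻ q : X × X, f q.2 ∂γ + K * ∫⁻ q : X × X, edist q.1 q.2 ∂γ := by
            rw [lintegral_add_left hm2, lintegral_const_mul' _ _ hKt]
        _ ≤ ∫⁻ x, f x ∂ν + ε := by rw [IFSaux.lintegral_snd h2 hf]; exact add_le_add_right hKe _
    · calc ∫⁻ x, f x ∂ν = ∫⁻ q : X × X, f q.2 ∂γ := (IFSaux.lintegral_snd h2 hf).symm
        _ ≤ ∫⁻ q : X × X, (f q.1 + K * edist q.1 q.2) ∂γ :=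
            lintegral_mono fun q => le_trans (hLipf q.2 q.1) (by rw [edist_comm])
        _ = ∫⁻ q : X × X, f q.1 ∂γ + K * ∫⁻ q : X × X, edist q.1 q.2 ∂γ := by
            rw [lintegral_add_left hm1, lintegral_const_mul' _ _ hKt]
        _ ≤ ∫⁻ x, f x ∂μ + ε := by rw [IFSaux.lintegral_fst h1 hf]; exact add_le_add_right hKe _
  refine le_antisymm ?_ ?_ <;>
    refine ENNReal.le_of_forall_pos_le_add fun ε hε _ => ?_
  · exact (main ε hε).1
  · exact (main ε hε).2

lemma thickenedIndicatorAux_lip {δ : ℝ} (hδ : 0 < δ) (E : Set X) (x y : X) :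
    thickenedIndicatorAux δ E x
      ≤ thickenedIndicatorAux δ E y + (ENNReal.ofReal δ)⁻¹ * edist x y := by
  simp only [thickenedIndicatorAux]
  refine IFSaux.tsub_aux ?_
  calc EMetric.infEdist y E / ENNReal.ofReal δ
      ≤ (edist y x + EMetric.infEdist x E) / ENNReal.ofReal δ := by
        gcongr; exact EMetric.infEdist_le_edist_add_infEdist
    _ = EMetric.infEdist x E / ENNReal.ofReal δ + (ENNReal.ofReal δ)⁻¹ * edist x y := by
        rw [ENNReal.add_div, edist_comm y x]
        simp only [div_eq_mul_inv]
        ring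

lemma eq_of_W1_zero {μ ν : Measure X} [IsProbabilityMeasure μ] [IsProbabilityMeasure ν]
    (h : W1 μ ν = 0) : μ = ν := by
  refine ext_of_generate_finite {s : Set X | IsClosed s}
    (BorelSpace.measurable_eq.trans borel_eq_generateFrom_isClosed)
    (fun s hs t ht _ => hs.inter ht) (fun s hs => ?_) (by simp)
  have δpos : ∀ n : ℕ, (0:ℝ) < 1/(n+1) := fun n => Nat.one_div_pos_of_nat
  have t1 := tendsto_lintegral_thickenedIndicator_of_isClosed μ hs δpos
    tendsto_one_div_add_atTop_nhds_zero_nat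
  have t2 := tendsto_lintegral_thickenedIndicator_of_isClosed ν hs δpos
    tendsto_one_div_add_atTop_nhds_zero_nat
  have heq : ∀ n : ℕ, (lintegral μ fun ω => (thickenedIndicator (δpos n) s ω : ℝ≥0∞))
      = lintegral ν fun ω => (thickenedIndicator (δpos n) s ω : ℝ≥0∞) := by
    intro n
    have hcoe : ∀ ω, (thickenedIndicator (δpos n) s ω : ℝ≥0∞)
        = thickenedIndicatorAux (1/(n+1)) s ω := by
      intro ω
      rw [thickenedIndicator_apply, ENNReal.coe_toNNReal thickenedIndicatorAux_lt_top.ne]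
    simp only [hcoe]
    refine lintegral_eq_of_W1_zero h
      (continuous_thickenedIndicatorAux (δpos n) s).measurable
      (thickenedIndicatorAux_le_one _ _)
      (K := (ENNReal.ofReal (1/(n+1)))⁻¹) ?_ ?_
      (fun x y => thickenedIndicatorAux_lip (δpos n) s x y)
    · exact ENNReal.inv_ne_zero.mpr ofReal_ne_top
    · exact ENNReal.inv_ne_top.mpr (by simpa using (ofReal_pos.mpr (δpos n)).ne')
  rw [funext heq] at t1
  exact tendsto_nhds_unique t1 t2

end zero

namespace IFScons

variable {M : Type*} [Fintype M] [LinearOrder M]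

/-- real weights -/
noncomputable def pr (p : M → ℝ≥0∞) (m : M) : ℝ := (p m).toReal

/-- left endpoints -/
noncomputable def tt (p : M → ℝ≥0∞) (m : M) : ℝ :=
  ∑ m' ∈ Finset.univ.filter (· < m), pr p m'

/-- the subintervals of [0,1) -/
def SS (p : M → ℝ≥0∞) (m : M) : Set ℝ := Set.Ico (tt p m) (tt p m + pr p m)

lemma pr_nonneg (p : M → ℝ≥0∞) (m : M) : 0 ≤ pr p m := ENNReal.toReal_nonneg

lemma tt_nonneg (p : M → ℝ≥0∞) (m : M) : 0 ≤ tt p m :=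
  Finset.sum_nonneg fun i _ => pr_nonneg p i

lemma filter_le_eq (p : M → ℝ≥0∞) (m : M) :
    Finset.univ.filter (· ≤ m) = insert m (Finset.univ.filter (· < m)) := by
  ext a
  simp only [Finset.mem_filter, Finset.mem_univ, true_and, Finset.mem_insert]
  rw [le_iff_lt_or_eq, or_comm]

lemma sum_filter_le (p : M → ℝ≥0∞) (m : M) :
    ∑ m'' ∈ Finset.univ.filter (· ≤ m), pr p m'' = tt p m + pr p m := by
  rw [filter_le_eq p m, Finset.sum_insert (by simp), tt, add_comm]

variable {p : M → ℝ≥0∞}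

lemma tt_add_le {m m' : M} (h : m < m') : tt p m + pr p m ≤ tt p m' := by
  rw [← sum_filter_le]
  refine Finset.sum_le_sum_of_subset_of_nonneg ?_ fun i _ _ => pr_nonneg p i
  intro a ha
  simp only [Finset.mem_filter, Finset.mem_univ, true_and] at *
  exact lt_of_le_of_lt ha h

section sum_one
variable (hp1 : ∑ m, p m = 1)
include hp1

lemma p_ne_top (m : M) : p m ≠ ⊤ := by
  refine ne_top_of_le_ne_top (hp1 ▸ one_ne_top) ?_
  exact Finset.single_le_sum (fun i _ => zero_le) (Finset.mem_univ m)

lemma pr_sum : ∑ m, pr p m = 1 := by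
  have h := ENNReal.toReal_sum (s := (Finset.univ : Finset M)) (f := p)
    (fun m _ => p_ne_top hp1 m)
  rw [hp1] at h
  simpa [pr] using h.symm

lemma tt_add_le_one (m : M) : tt p m + pr p m ≤ 1 := by
  rw [← sum_filter_le, ← pr_sum hp1]
  exact Finset.sum_le_sum_of_subset_of_nonneg (Finset.subset_univ _)
    fun i _ _ => pr_nonneg p i

end sum_one

lemma SS_disj : Pairwise (Function.onFun Disjoint (SS p)) := by
  have key : ∀ m m' : M, m < m' → Disjoint (SS p m) (SS p m') := by
    intro m m' h
    rw [Set.disjoint_left]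
    rintro x ⟨_, hx2⟩ ⟨hx3, _⟩
    exact absurd (lt_of_lt_of_le hx2 (le_trans (tt_add_le h) hx3)) (lt_irrefl x)
  intro m m' hne
  rcases hne.lt_or_gt with h | h
  · exact key m m' h
  · exact (key m' m h).symm

lemma SS_union (hp0 : ∀ m, 0 < p m) (hp1 : ∑ m, p m = 1) :
    (⋃ m, SS p m) = Set.Ico (0:ℝ) 1 := by
  have hM : Nonempty M := by
    by_contra hM
    rw [not_nonempty_iff] at hM
    rw [Finset.univ_eq_empty, Finset.sum_empty] at hp1
    exact zero_ne_one hp1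
  apply subset_antisymm
  · rintro x hx
    obtain ⟨m, hm⟩ := Set.mem_iUnion.mp hx
    exact ⟨le_trans (tt_nonneg p m) hm.1, lt_of_lt_of_le hm.2 (tt_add_le_one hp1 m)⟩
  · rintro x ⟨hx0, hx1⟩
    have hA : (Finset.univ.filter (fun m => tt p m ≤ x)).Nonempty := by
      obtain ⟨m0, hm0⟩ : ∃ m0 : M, ∀ a : M, m0 ≤ a :=
        ⟨(Finset.univ : Finset M).min' Finset.univ_nonempty,
          fun a => Finset.min'_le _ _ (Finset.mem_univ a)⟩
      refine ⟨m0, ?_⟩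
      simp only [Finset.mem_filter, Finset.mem_univ, true_and]
      have hemp : Finset.univ.filter (· < m0) = ∅ :=
        Finset.filter_false_of_mem fun a _ => not_lt.mpr (hm0 a)
      rw [tt, hemp, Finset.sum_empty]
      exact hx0
    set A := Finset.univ.filter (fun m => tt p m ≤ x) with hAdef
    set ms := A.max' hA with hms
    have hms_le : tt p ms ≤ x := by
      have h := A.max'_mem hA
      simp only [hAdef, Finset.mem_filter] at h
      exact h.2
    refine Set.mem_iUnion.mpr ⟨ms, hms_le, ?_⟩
    by_contra hcon
    push_neg at hcon
    rcases (Finset.univ.filter (fun m'' => ms < m'')).eq_empty_or_nonempty with hB | hB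
    · have huniv : Finset.univ.filter (· ≤ ms) = (Finset.univ : Finset M) := by
        refine Finset.filter_true_of_mem fun a _ => ?_
        by_contra ha
        have : a ∈ Finset.univ.filter (fun m'' => ms < m'') := by
          simp [lt_of_not_ge ha]
        rw [hB] at this
        exact absurd this (Finset.notMem_empty a)
      have : tt p ms + pr p ms = 1 := by
        rw [← sum_filter_le, huniv, pr_sum hp1]
      exact absurd (lt_of_lt_of_le hx1 (this ▸ hcon)) (lt_irrefl x)
    · set m' := (Finset.univ.filter (fun m'' => ms < m'')).min' hB with hm'def
      have hmsm' : ms < m' := by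
        have := (Finset.univ.filter (fun m'' => ms < m'')).min'_mem hB
        simpa [← hm'def] using this
      have hfilt : Finset.univ.filter (· < m') = Finset.univ.filter (· ≤ ms) := by
        ext a
        simp only [Finset.mem_filter, Finset.mem_univ, true_and]
        constructor
        · intro ha
          by_contra hale
          have : a ∈ Finset.univ.filter (fun m'' => ms < m'') := by
            simp [lt_of_not_ge hale]
          exact absurd ha (not_lt.mpr (Finset.min'_le _ _ this))
        · intro ha
          exact lt_of_le_of_lt ha hmsm'
      have htm' : tt p m' ≤ x := by
        rw [tt, hfilt, sum_filter_le]
        exact hcon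
      have : m' ∈ A := by simp [hAdef, htm']
      exact absurd (A.le_max' m' this) (not_le.mpr hmsm')

end IFScons

namespace IFScons

open scoped Classical

variable {M : Type*} [Fintype M] [LinearOrder M] [Nonempty M]

/-- the digit of x -/
noncomputable def dd (p : M → ℝ≥0∞) (x : ℝ) : M :=
  if h : ∃ m, x ∈ SS p m then h.choose else Classical.arbitrary M

/-- the rescaled remainder -/
noncomputable def gg (p : M → ℝ≥0∞) (x : ℝ) : ℝ :=
  (x - tt p (dd p x)) / pr p (dd p x)

variable {p : M → ℝ≥0∞}

lemma dd_eq {m : M} {x : ℝ} (hx : x ∈ SS p m) : dd p x = m := by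
  rw [dd, dif_pos ⟨m, hx⟩]
  set h : ∃ m', x ∈ SS p m' := ⟨m, hx⟩
  by_contra hne
  exact Set.disjoint_left.mp (SS_disj hne) h.choose_spec hx

lemma measurableSet_dd (m : M) : MeasurableSet {x : ℝ | dd p x = m} := by
  classical
  have : {x : ℝ | dd p x = m} =
      SS p m ∪ ((⋃ m', SS p m')ᶜ ∩ {x : ℝ | Classical.arbitrary M = m}) := by
    ext x
    simp only [Set.mem_setOf_eq, Set.mem_union, Set.mem_inter_iff, Set.mem_compl_iff,
      Set.mem_iUnion]
    constructor
    · intro hx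
      by_cases h : ∃ m', x ∈ SS p m'
      · left
        obtain ⟨m', hm'⟩ := h
        rwa [← hx, dd_eq hm']
      · right
        refine ⟨h, ?_⟩
        rwa [dd, dif_neg h] at hx
    · rintro (hx | ⟨hx, harb⟩)
      · exact dd_eq hx
      · rw [dd, dif_neg (by simpa using hx)]
        exact harb
  rw [this]
  refine measurableSet_Ico.union (MeasurableSet.inter ?_ ?_)
  · exact (MeasurableSet.iUnion fun m' => measurableSet_Ico).compl
  · rcases eq_or_ne (Classical.arbitrary M) m with h | h
    · have he : {x : ℝ | Classical.arbitrary M = m} = Set.univ :=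
        Set.eq_univ_of_forall fun _ => h
      rw [he]; exact MeasurableSet.univ
    · have he : {x : ℝ | Classical.arbitrary M = m} = ∅ := by
        ext y; simp [h]
      rw [he]; exact MeasurableSet.empty

lemma meas_fiber {β : Type*} [MeasurableSpace β] {u : M → ℝ → β}
    (hu : ∀ m, Measurable (u m)) : Measurable fun x => u (dd p x) x := by
  intro A hA
  have : (fun x => u (dd p x) x) ⁻¹' A = ⋃ m, ({x | dd p x = m} ∩ u m ⁻¹' A) := by
    ext x
    simp only [Set.mem_preimage, Set.mem_iUnion, Set.mem_inter_iff, Set.mem_setOf_eq]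
    constructor
    · intro hx; exact ⟨dd p x, rfl, hx⟩
    · rintro ⟨m, hm, hx⟩; rwa [hm]
  rw [this]
  exact MeasurableSet.iUnion fun m => (measurableSet_dd m).inter (hu m hA)

lemma measurable_gg : Measurable (gg p) :=
  meas_fiber (u := fun m x => (x - tt p m) / pr p m)
    (fun m => (measurable_id.sub_const _).div_const _)

lemma gg_eq {m : M} {x : ℝ} (hx : x ∈ SS p m) : gg p x = (x - tt p m) / pr p m := by
  rw [gg, dd_eq hx]

/-- change of variables for affine maps -/
lemma cov (a l : ℝ) (hl : 0 < l) {f : ℝ → ℝ≥0∞} (hf : Measurable f) :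
    ∫⁻ x in Set.Ico a (a + l), f ((x - a) / l) ∂(volume : Measure ℝ)
      = ENNReal.ofReal l * ∫⁻ y in Set.Ico (0:ℝ) 1, f y ∂(volume : Measure ℝ) := by
  have hh : Measurable fun x : ℝ => (x - a) / l :=
    (measurable_id.sub_const _).div_const _
  have hpre : (fun x : ℝ => (x - a) / l) ⁻¹' Set.Ico (0:ℝ) 1 = Set.Ico a (a + l) := by
    ext x
    simp only [Set.mem_preimage, Set.mem_Ico, div_lt_one hl, le_div_iff₀ hl, zero_mul]
    constructor
    · rintro ⟨h1, h2⟩; constructor <;> linarith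
    · rintro ⟨h1, h2⟩; constructor <;> linarith
  have hmap : Measure.map (fun x : ℝ => (x - a) / l) volume = ENNReal.ofReal l • volume := by
    have h1 : (fun x : ℝ => (x - a) / l)
        = (fun y : ℝ => l⁻¹ * y) ∘ (fun x : ℝ => -a + x) := by
      funext x
      simp only [Function.comp_apply, div_eq_inv_mul]
      ring
    rw [h1, ← Measure.map_map (measurable_const_mul _) (measurable_const_add _)]
    have h2 : Measure.map (fun x : ℝ => -a + x) volume = volume :=
      (measurePreserving_add_left volume (-a)).map_eq
    rw [h2, Real.map_volume_mul_left (inv_ne_zero hl.ne')]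
    congr 1
    rw [inv_inv, abs_of_pos hl]
  calc ∫⁻ x in Set.Ico a (a + l), f ((x - a) / l) ∂(volume : Measure ℝ)
      = ∫⁻ y, f y ∂(Measure.map (fun x : ℝ => (x - a) / l)
          (volume.restrict (Set.Ico a (a + l)))) := (lintegral_map hf hh).symm
    _ = ∫⁻ y, f y ∂((Measure.map (fun x : ℝ => (x - a) / l) volume).restrict
          (Set.Ico (0:ℝ) 1)) := by rw [Measure.restrict_map hh measurableSet_Ico, hpre]
    _ = ENNReal.ofReal l * ∫⁻ y in Set.Ico (0:ℝ) 1, f y ∂(volume : Measure ℝ) := by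
        rw [hmap, Measure.restrict_smul, lintegral_smul_measure, smul_eq_mul]

/-- the fundamental skew-product identity -/
lemma skew (hp0 : ∀ m, 0 < p m) (hp1 : ∑ m, p m = 1)
    {ψ : M → ℝ → ℝ≥0∞} (hψ : ∀ m, Measurable (ψ m)) :
    ∫⁻ x, ψ (dd p x) (gg p x) ∂(volume.restrict (Set.Ico (0:ℝ) 1))
      = ∑ m, p m * ∫⁻ y, ψ m y ∂(volume.restrict (Set.Ico (0:ℝ) 1)) := by
  have hP : volume.restrict (Set.Ico (0:ℝ) 1)
      = Measure.sum (fun m => volume.restrict (SS p m)) := by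
    rw [← SS_union hp0 hp1, Measure.restrict_iUnion SS_disj fun m => measurableSet_Ico]
  rw [show ∫⁻ x, ψ (dd p x) (gg p x) ∂(volume.restrict (Set.Ico (0:ℝ) 1))
      = ∫⁻ x, ψ (dd p x) (gg p x) ∂(Measure.sum (fun m => volume.restrict (SS p m)))
    from by rw [← hP]]
  rw [lintegral_sum_measure, tsum_fintype]
  refine Finset.sum_congr rfl fun m _ => ?_
  have step1 : ∫⁻ x in SS p m, ψ (dd p x) (gg p x) ∂(volume : Measure ℝ)
      = ∫⁻ x in SS p m, ψ m ((x - tt p m) / pr p m) ∂(volume : Measure ℝ) := by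
    refine setLIntegral_congr_fun measurableSet_Ico (fun x hx => ?_)
    rw [dd_eq hx, gg_eq hx]
  have hprpos : 0 < pr p m :=
    ENNReal.toReal_pos (hp0 m).ne' (p_ne_top hp1 m)
  rw [step1, SS, cov (tt p m) (pr p m) hprpos (hψ m),
    show ENNReal.ofReal (pr p m) = p m from by
      rw [pr, ENNReal.ofReal_toReal (p_ne_top hp1 m)]]

end IFScons

section existence

open IFScons

variable {X : Type*} [MetricSpace X] [CompleteSpace X] [MeasurableSpace X] [BorelSpace X]
  [SecondCountableTopology X] [Nonempty X]
  {M : Type*} [Fintype M] [LinearOrder M] [Nonempty M]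

theorem exists_invariant (F : M → X → X) (L : M → NNReal)
    (hLip : ∀ m, LipschitzWith (L m) (F m)) (p : M → ℝ≥0∞)
    (hp0 : ∀ m, 0 < p m) (hp1 : ∑ m, p m = 1)
    (hcontr : ∑ m, p m * (L m : ℝ≥0∞) < 1) :
    ∃ μ : Measure X, IsProbabilityMeasure μ ∧ HasFiniteFirstMoment μ ∧
      (∑ m, p m • Measure.map (F m) μ) = μ := by
  classical
  set P : Measure ℝ := volume.restrict (Set.Ico (0:ℝ) 1) with hPdef
  haveI hPprob : IsProbabilityMeasure P := by
    constructor
    rw [hPdef, Measure.restrict_apply_univ, Real.volume_Ico]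
    norm_num
  obtain ⟨x0⟩ := ‹Nonempty X›
  set c := ∑ m, p m * (L m : ℝ≥0∞) with hc
  have hF : ∀ m, Measurable (F m) := fun m => (hLip m).continuous.measurable
  set Zs : ℕ → ℝ → X := fun n => Nat.rec (motive := fun _ => ℝ → X)
    (fun _ => x0) (fun _ ih x => F (dd p x) (ih (gg p x))) n with hZs
  have hZsMeas : ∀ n, Measurable (Zs n) := by
    intro n
    induction n with
    | zero => exact measurable_const
    | succ n ih =>
      exact meas_fiber (u := fun m x => F m (Zs n (gg p x)))
        fun m => (hF m).comp (ih.comp measurable_gg)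
  set D : ℕ → ℝ → ℝ≥0∞ := fun n x => edist (Zs n x) (Zs (n+1) x) with hD
  have hDmeas : ∀ n, Measurable (D n) := fun n => (hZsMeas n).edist (hZsMeas (n+1))
  set C0 : ℝ≥0∞ := ∑ m, p m * edist x0 (F m x0) with hC0
  have hC0top : C0 ≠ ⊤ := by
    rw [hC0]
    refine (ENNReal.sum_lt_top.mpr fun m _ => ?_).ne
    exact ENNReal.mul_lt_top (lt_top_iff_ne_top.mpr (p_ne_top hp1 m)) (edist_lt_top _ _)
  have hDbound : ∀ n, ∫⁻ x, D n x ∂P ≤ c ^ n * C0 := by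
    intro n
    induction n with
    | zero =>
      calc ∫⁻ x, D 0 x ∂P = ∑ m, p m * ∫⁻ _, edist x0 (F m x0) ∂P :=
            skew hp0 hp1 (ψ := fun m _ => edist x0 (F m x0)) fun m => measurable_const
        _ = C0 := by
            rw [hC0]
            refine Finset.sum_congr rfl fun m _ => ?_
            rw [lintegral_const, measure_univ, mul_one]
        _ ≤ c ^ 0 * C0 := by rw [pow_zero, one_mul]
    | succ n ih =>
      have hstep : ∀ x, D (n+1) x
          ≤ (fun m y => (L m : ℝ≥0∞) * D n y) (dd p x) (gg p x) := fun x =>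
        (hLip (dd p x)).edist_le_mul _ _
      calc ∫⁻ x, D (n+1) x ∂P
          ≤ ∫⁻ x, (fun m y => (L m : ℝ≥0∞) * D n y) (dd p x) (gg p x) ∂P :=
            lintegral_mono hstep
        _ = ∑ m, p m * ∫⁻ y, (L m : ℝ≥0∞) * D n y ∂P :=
            skew hp0 hp1 (ψ := fun m y => (L m : ℝ≥0∞) * D n y)
              fun m => (hDmeas n).const_mul _
        _ = ∑ m, p m * ((L m : ℝ≥0∞) * ∫⁻ y, D n y ∂P) := by
            refine Finset.sum_congr rfl fun m _ => ?_
            rw [lintegral_const_mul' _ _ coe_ne_top]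
        _ ≤ ∑ m, p m * ((L m : ℝ≥0∞) * (c ^ n * C0)) :=
            Finset.sum_le_sum fun m _ => mul_le_mul_right (mul_le_mul_right ih _) _
        _ = c * (c ^ n * C0) := by
            rw [hc, Finset.sum_mul]
            exact Finset.sum_congr rfl fun m _ => by ring
        _ = c ^ (n+1) * C0 := by ring
  have htsum_meas : Measurable fun x => ∑' n, D n x := Measurable.ennreal_tsum hDmeas
  have htotne : ∫⁻ x, (∑' n, D n x) ∂P ≠ ⊤ := by
    have htot : ∫⁻ x, (∑' n, D n x) ∂P ≤ (1 - c)⁻¹ * C0 := by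
      rw [lintegral_tsum fun n => (hDmeas n).aemeasurable]
      calc ∑' n, ∫⁻ x, D n x ∂P ≤ ∑' n, c ^ n * C0 := ENNReal.tsum_le_tsum hDbound
        _ = (1 - c)⁻¹ * C0 := by rw [ENNReal.tsum_mul_right, ENNReal.tsum_geometric]
    refine ne_top_of_le_ne_top ?_ htot
    exact ENNReal.mul_ne_top (ENNReal.inv_ne_top.mpr (tsub_pos_iff_lt.mpr hcontr).ne') hC0top
  set Sg : Set ℝ := {x | (∑' n, D n x) < ⊤} with hSg
  have hSgMeas : MeasurableSet Sg := measurableSet_lt htsum_meas measurable_const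
  have hSgae : ∀ᵐ x ∂P, x ∈ Sg := ae_lt_top htsum_meas htotne
  set Z' : ℕ → ℝ → X := fun n => Sg.piecewise (Zs n) (fun _ => x0) with hZ'
  have hZ'Meas : ∀ n, Measurable (Z' n) := fun n =>
    Measurable.piecewise hSgMeas (hZsMeas n) measurable_const
  have hZ'mem : ∀ n, ∀ x ∈ Sg, Z' n x = Zs n x := fun n x hx =>
    Set.piecewise_eq_of_mem _ _ _ hx
  have hZ'nmem : ∀ n, ∀ x ∉ Sg, Z' n x = x0 := fun n x hx =>
    Set.piecewise_eq_of_notMem _ _ _ hx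
  have hZ'Cauchy : ∀ x, CauchySeq fun n => Z' n x := by
    intro x
    by_cases hx : x ∈ Sg
    · refine cauchySeq_of_edist_le_of_tsum_ne_top (fun n => D n x) (fun n => ?_) ?_
      · rw [hZ'mem n x hx, hZ'mem (n+1) x hx]
      · exact (show (∑' n, D n x) < ⊤ from hx).ne
    · rw [show (fun n => Z' n x) = fun _ => x0 from funext fun n => hZ'nmem n x hx]
      exact cauchySeq_const x0
  set Z : ℝ → X := fun x => limUnder atTop fun n => Z' n x with hZdef
  have hZtend : ∀ x, Filter.Tendsto (fun n => Z' n x) atTop (nhds (Z x)) := fun x =>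
    (hZ'Cauchy x).tendsto_limUnder
  have hZMeas : Measurable Z :=
    measurable_of_tendsto_metrizable hZ'Meas (tendsto_pi_nhds.mpr hZtend)
  have hpartial : ∀ x n, edist (Zs n x) x0 ≤ ∑ i ∈ Finset.range n, D i x := by
    intro x n
    induction n with
    | zero =>
      have h0 : Zs 0 x = x0 := rfl
      rw [h0]
      simp
    | succ n ih =>
      calc edist (Zs (n+1) x) x0 ≤ edist (Zs (n+1) x) (Zs n x) + edist (Zs n x) x0 :=
            edist_triangle _ _ _
        _ ≤ D n x + ∑ i ∈ Finset.range n, D i x := by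
            rw [edist_comm]
            exact add_le_add_right ih _
        _ = ∑ i ∈ Finset.range (n+1), D i x := by
            rw [Finset.sum_range_succ, add_comm]
  have hZbound : ∀ x, edist (Z x) x0 ≤ ∑' n, D n x := by
    intro x
    by_cases hx : x ∈ Sg
    · refine le_of_tendsto ((hZtend x).edist tendsto_const_nhds)
        (Filter.Eventually.of_forall fun n => ?_)
      rw [hZ'mem n x hx]
      exact (hpartial x n).trans (ENNReal.sum_le_tsum (Finset.range n))
    · have : Z x = x0 := by
        refine tendsto_nhds_unique (hZtend x) ?_
        rw [show (fun n => Z' n x) = fun _ => x0 from funext fun n => hZ'nmem n x hx]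
        exact tendsto_const_nhds
      rw [this, edist_self]
      exact zero_le
  have hmapg : Measure.map (gg p) P = P := by
    refine Measure.ext fun A hA => ?_
    rw [Measure.map_apply measurable_gg hA]
    have key : ∫⁻ x, (fun (_ : M) y => A.indicator (fun _ => (1:ℝ≥0∞)) y) (dd p x) (gg p x) ∂P
        = ∑ m, p m * ∫⁻ y, A.indicator (fun _ => (1:ℝ≥0∞)) y ∂P :=
      skew hp0 hp1 fun m => measurable_const.indicator hA
    have hl : ∫⁻ y, A.indicator (fun _ => (1:ℝ≥0∞)) y ∂P = P A := by
      rw [lintegral_indicator hA, setLIntegral_one]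
    have hr : ∫⁻ x, (fun (_ : M) y => A.indicator (fun _ => (1:ℝ≥0∞)) y) (dd p x) (gg p x) ∂P
        = P (gg p ⁻¹' A) := by
      have : (fun x => A.indicator (fun _ => (1:ℝ≥0∞)) (gg p x))
          = fun x => (gg p ⁻¹' A).indicator (fun _ => (1:ℝ≥0∞)) x := by
        funext x
        by_cases h : gg p x ∈ A <;> simp [Set.indicator, h]
      rw [show (fun x => (fun (_ : M) y => A.indicator (fun _ => (1:ℝ≥0∞)) y)
          (dd p x) (gg p x)) = fun x => A.indicator (fun _ => (1:ℝ≥0∞)) (gg p x) from rfl]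
      rw [this, lintegral_indicator (measurable_gg hA), setLIntegral_one]
    rw [← hr, key]
    rw [hl, ← Finset.sum_mul, hp1, one_mul]
  have hgae : ∀ᵐ x ∂P, gg p x ∈ Sg := by
    have h := hSgae
    rw [← hmapg] at h
    exact (ae_map_iff measurable_gg.aemeasurable hSgMeas).mp h
  have hfix : ∀ᵐ x ∂P, Z x = F (dd p x) (Z (gg p x)) := by
    filter_upwards [hSgae, hgae] with x hx hgx
    have h1 : Filter.Tendsto (fun n => Zs n x) atTop (nhds (Z x)) := by
      have := hZtend x
      rwa [show (fun n => Z' n x) = fun n => Zs n x from funext fun n => hZ'mem n x hx] at this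
    have h2 : Filter.Tendsto (fun n => Zs n (gg p x)) atTop (nhds (Z (gg p x))) := by
      have := hZtend (gg p x)
      rwa [show (fun n => Z' n (gg p x)) = fun n => Zs n (gg p x) from
        funext fun n => hZ'mem n (gg p x) hgx] at this
    have h3 : Filter.Tendsto (fun n => Zs (n+1) x) atTop
        (nhds (F (dd p x) (Z (gg p x)))) :=
      (((hLip (dd p x)).continuous.tendsto _).comp h2 : _)
    have h4 : Filter.Tendsto (fun n => Zs (n+1) x) atTop (nhds (Z x)) :=
      h1.comp (Filter.tendsto_add_atTop_nat 1)
    exact tendsto_nhds_unique h4 h3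
  refine ⟨Measure.map Z P, Measure.isProbabilityMeasure_map hZMeas.aemeasurable, ⟨x0, ?_⟩, ?_⟩
  · have hedm : Measurable fun y : X => edist y x0 :=
      (continuous_id.edist continuous_const).measurable
    rw [lintegral_map hedm hZMeas]
    refine ne_top_of_le_ne_top htotne (lintegral_mono fun x => hZbound x)
  · refine Measure.ext fun A hA => ?_
    have hPind : ∀ (f : ℝ → X), Measurable f →
        P (f ⁻¹' A) = ∫⁻ x, A.indicator (fun _ => (1:ℝ≥0∞)) (f x) ∂P := by
      intro f hf
      rw [show (fun x => A.indicator (fun _ => (1:ℝ≥0∞)) (f x))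
          = fun x => (f ⁻¹' A).indicator (fun _ => (1:ℝ≥0∞)) x from
        funext fun x => by by_cases h : f x ∈ A <;> simp [Set.indicator, h]]
      rw [lintegral_indicator (hf hA), setLIntegral_one]
    calc (∑ m, p m • Measure.map (F m) (Measure.map Z P)) A
        = ∑ m, p m * (Measure.map Z P) (F m ⁻¹' A) :=
          sum_smul_map_apply p F hF _ hA
      _ = ∑ m, p m * ∫⁻ x, A.indicator (fun _ => (1:ℝ≥0∞)) (F m (Z x)) ∂P := by
          refine Finset.sum_congr rfl fun m _ => ?_
          rw [Measure.map_apply hZMeas ((hF m) hA),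
            show Z ⁻¹' (F m ⁻¹' A) = (fun x => F m (Z x)) ⁻¹' A from rfl,
            hPind (fun x => F m (Z x)) ((hF m).comp hZMeas)]
      _ = ∫⁻ x, (fun m y => A.indicator (fun _ => (1:ℝ≥0∞)) (F m (Z y)))
            (dd p x) (gg p x) ∂P :=
          (skew hp0 hp1 fun m =>
            (measurable_const.indicator hA).comp ((hF m).comp hZMeas)).symm
      _ = ∫⁻ x, A.indicator (fun _ => (1:ℝ≥0∞)) (Z x) ∂P := by
          refine lintegral_congr_ae (hfix.mono fun x hx => ?_)
          simp only
          rw [← hx]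
      _ = (Measure.map Z P) A := by
          rw [← hPind Z hZMeas, Measure.map_apply hZMeas hA]

end existence

/-- An IFS with finitely many Lipschitz maps, strictly positive probabilities and average
contraction `Σ p_m L_m < 1` has a contractive dual transfer operator on the Wasserstein-1
space, and hence a unique invariant probability measure with finite first moment. -/
theorem ifs_unique_invariant_measure
    {X : Type*} [MetricSpace X] [CompleteSpace X] [TopologicalSpace.SeparableSpace X]
    [MeasurableSpace X] [BorelSpace X] [Nonempty X]
    {M : Type*} [Fintype M]
    (F : M → X → X) (L : M → NNReal) (hLip : ∀ m, LipschitzWith (L m) (F m))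
    (p : M → ℝ≥0∞) (hp0 : ∀ m, 0 < p m) (hp1 : ∑ m, p m = 1)
    (hcontr : ∑ m, p m * (L m : ℝ≥0∞) < 1) :
    (∀ μ ν : Measure X, IsProbabilityMeasure μ → IsProbabilityMeasure ν →
        HasFiniteFirstMoment μ → HasFiniteFirstMoment ν →
        W1 (∑ m, p m • Measure.map (F m) μ) (∑ m, p m • Measure.map (F m) ν)
          ≤ (∑ m, p m * (L m : ℝ≥0∞)) * W1 μ ν) ∧
      (∃! μ : Measure X, IsProbabilityMeasure μ ∧ HasFiniteFirstMoment μ ∧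
        (∑ m, p m • Measure.map (F m) μ) = μ) := by
  haveI : SecondCountableTopology X := UniformSpace.secondCountable_of_separable X
  letI : LinearOrder M := LinearOrder.lift' (Fintype.equivFin M) (Equiv.injective _)
  haveI : Nonempty M := by
    by_contra hM
    rw [not_nonempty_iff] at hM
    rw [Finset.univ_eq_empty, Finset.sum_empty] at hp1
    exact zero_ne_one hp1
  constructor
  · intro μ ν hμ hν hμm hνm
    exact contraction F L hLip p hcontr hμm hνm
  · obtain ⟨μ, h1, h2, h3⟩ := exists_invariant F L hLip p hp0 hp1 hcontr
    refine ⟨μ, ⟨h1, h2, h3⟩, ?_⟩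
    rintro ν ⟨hν1, hν2, hν3⟩
    haveI := h1; haveI := hν1
    have hle := contraction F L hLip p hcontr (μ := ν) (ν := μ) hν2 h2
    rw [hν3, h3] at hle
    set W := W1 ν μ with hW
    have hWtop : W ≠ ⊤ := (IFSaux.W1_lt_top hν2 h2).ne
    have hW0 : W = 0 := by
      by_contra hW0
      have hlt : (∑ m, p m * (L m : ℝ≥0∞)) * W < 1 * W :=
        ENNReal.mul_lt_mul_left hW0 hWtop hcontr
      rw [one_mul] at hlt
      exact absurd (lt_of_le_of_lt hle hlt) (lt_irrefl W)
    exact eq_of_W1_zero hW0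
end

section
/- The dual transfer operator μ ↦ Σ_m p_m (F_m)_* μ of an iterated function system with Σ_m p_m Lip(F_m) ≤ c < 1 is a c-Lipschitz map with respect to the Wasserstein-1 distance on probability measures with finite first moment. -/
open MeasureTheory ENNReal

/-- Pushforward of a finite sum of measures. -/
lemma map_finset_sum' {α β ι : Type*} [MeasurableSpace α] [MeasurableSpace β]
    (s : Finset ι) (μ : ι → MeasureTheory.Measure α) {f : α → β} (hf : Measurable f) :
    (∑ i ∈ s, μ i).map f = ∑ i ∈ s, (μ i).map f := by
  classical
  induction s using Finset.induction_on with
  | empty => simp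
  | insert _ _ h ih =>
    rw [Finset.sum_insert h, Finset.sum_insert h, MeasureTheory.Measure.map_add _ _ hf, ih]

/-- The dual transfer operator `μ ↦ Σ_m p_m (F_m)_* μ` of an IFS with
`Σ_m p_m Lip(F_m) ≤ c < 1` is `c`-Lipschitz for the Wasserstein-1 distance. -/
theorem dual_transfer_operator_lipschitz
    {X : Type*} [MetricSpace X] [CompleteSpace X] [TopologicalSpace.SeparableSpace X]
    [MeasurableSpace X] [BorelSpace X]
    {M : Type*} [Fintype M]
    (F : M → X → X) (L : M → NNReal) (hLip : ∀ m, LipschitzWith (L m) (F m))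
    (p : M → ℝ≥0∞) (hp0 : ∀ m, 0 ≤ p m) (hp1 : ∑ m, p m = 1)
    (c : ℝ≥0∞) (hc0 : 0 < c) (hc1 : c < 1)
    (hcontr : ∑ m, p m * (L m : ℝ≥0∞) ≤ c) :
    ∀ μ ν : Measure X, IsProbabilityMeasure μ → IsProbabilityMeasure ν →
      HasFiniteFirstMoment μ → HasFiniteFirstMoment ν →
      W1 (∑ m, p m • Measure.map (F m) μ) (∑ m, p m • Measure.map (F m) ν)
        ≤ c * W1 μ ν := by
  intro μ ν hμ hν _ _
  have hFm : ∀ m, Measurable (F m) := fun m => (hLip m).continuous.measurable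
  have hmapm : ∀ m, Measurable (Prod.map (F m) (F m)) :=
    fun m => (hFm m).prodMap (hFm m)
  have hed : Measurable (fun q : X × X => edist q.1 q.2) := by
    exact continuous_edist.measurable
  have key : ∀ γ : Measure (X × X), (γ.map Prod.fst = μ ∧ γ.map Prod.snd = ν) →
      W1 (∑ m, p m • Measure.map (F m) μ) (∑ m, p m • Measure.map (F m) ν)
        ≤ c * ∫⁻ q : X × X, edist q.1 q.2 ∂γ := by
    rintro γ ⟨h1, h2⟩
    set σ : Measure (X × X) := ∑ m, p m • γ.map (Prod.map (F m) (F m)) with hσ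
    have hσ1 : σ.map Prod.fst = ∑ m, p m • Measure.map (F m) μ := by
      rw [hσ, map_finset_sum' _ _ measurable_fst]
      refine Finset.sum_congr rfl fun m _ => ?_
      rw [Measure.map_smul, Measure.map_map measurable_fst (hmapm m)]
      have : (Prod.fst ∘ Prod.map (F m) (F m)) = F m ∘ Prod.fst := rfl
      rw [this, ← Measure.map_map (hFm m) measurable_fst, h1]
    have hσ2 : σ.map Prod.snd = ∑ m, p m • Measure.map (F m) ν := by
      rw [hσ, map_finset_sum' _ _ measurable_snd]
      refine Finset.sum_congr rfl fun m _ => ?_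
      rw [Measure.map_smul, Measure.map_map measurable_snd (hmapm m)]
      have : (Prod.snd ∘ Prod.map (F m) (F m)) = F m ∘ Prod.snd := rfl
      rw [this, ← Measure.map_map (hFm m) measurable_snd, h2]
    have hcost : ∫⁻ q : X × X, edist q.1 q.2 ∂σ
        ≤ c * ∫⁻ q : X × X, edist q.1 q.2 ∂γ := by
      rw [hσ, lintegral_finset_sum_measure]
      have hbound : ∀ m, ∫⁻ q : X × X, edist q.1 q.2 ∂(p m • γ.map (Prod.map (F m) (F m)))
          ≤ p m * (L m : ℝ≥0∞) * ∫⁻ q : X × X, edist q.1 q.2 ∂γ := by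
        intro m
        rw [lintegral_smul_measure, lintegral_map hed (hmapm m)]
        calc p m * ∫⁻ q : X × X, edist (F m q.1) (F m q.2) ∂γ
            ≤ p m * ∫⁻ q : X × X, (L m : ℝ≥0∞) * edist q.1 q.2 ∂γ := by
              gcongr with q
              exact (hLip m) q.1 q.2
          _ = p m * (L m : ℝ≥0∞) * ∫⁻ q : X × X, edist q.1 q.2 ∂γ := by
              rw [lintegral_const_mul _ hed, mul_assoc]
      calc ∑ m, ∫⁻ q : X × X, edist q.1 q.2 ∂(p m • γ.map (Prod.map (F m) (F m)))
          ≤ ∑ m, p m * (L m : ℝ≥0∞) * ∫⁻ q : X × X, edist q.1 q.2 ∂γ :=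
            Finset.sum_le_sum fun m _ => hbound m
        _ = (∑ m, p m * (L m : ℝ≥0∞)) * ∫⁻ q : X × X, edist q.1 q.2 ∂γ := by
            rw [Finset.sum_mul]
        _ ≤ c * ∫⁻ q : X × X, edist q.1 q.2 ∂γ := by gcongr
    refine le_trans ?_ hcost
    exact iInf₂_le σ ⟨hσ1, hσ2⟩
  conv_rhs => rw [W1]
  simp_rw [ENNReal.mul_iInf_of_ne hc0.ne' (hc1.trans_le le_top).ne]
  exact le_iInf₂ key
end
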